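/- Let q be a positive integer, M ≥ 2 an integer, N ≥ 1 with t = √(q/N), and let C be a real number with 1 ≤ C < t/4. Let u/v = [0;r₁,…,r_l] ∈ Q̄_M(t), and let a₁, a₂ be elements of Z_M(t) with a₁/q, a₂/q ∈ J_{u/v}. Let x₁ ≠ x₂ be denominators of convergents to a₁/q and to a₂/q respectively, with t < x₁ < q/t and t < x₂ < q/t. If N^{3/2} ≤ √q / (2(M+2)²·C), then there are no integers α, β with α·β ≠ 0, |α| ≤ C, |β| ≤ C and α·x₁ ≡ β·x₂ (mod q). -/

import Mathlib

/-- The value of the regular continued fraction `[0; c₁, …, c_s]`. -/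
def cfVal (l : List ℕ) : ℚ :=
  l.foldr (fun c r => 1 / ((c : ℚ) + r)) 0

/-- `IsCFOf x l` means that `l = [c₁, …, c_s]` is the regular continued fraction
expansion of `x`, i.e. `x = [0; c₁, …, c_s]`, all partial quotients are positive
integers and the last one is at least `2`. -/
def IsCFOf (x : ℚ) (l : List ℕ) : Prop :=
  (∀ c ∈ l, 1 ≤ c) ∧ (∀ h : l ≠ [], 2 ≤ l.getLast h) ∧ cfVal l = x

/-- The continuant `K(c₁, …, c_s)`, i.e. the denominator of `[0; c₁, …, c_s]`
in lowest terms. -/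
def cont : List ℕ → ℕ
  | [] => 1
  | [c] => c
  | c :: d :: l => c * cont (d :: l) + cont l

/-- `ZPred q M t a` expresses `a ∈ Z_M(t)`: writing `a/q` in lowest terms as
`[0; c₁, …, c_s]`, every partial quotient `c_j` whose convergent denominator
`q_j = K(c₁,…,c_j)` satisfies `q_j < t` obeys `c_j ≤ M`. -/
def ZPred (q M : ℕ) (t : ℝ) (a : ℕ) : Prop :=
  ∃ l : List ℕ, IsCFOf ((a : ℚ) / q) l ∧
    ∀ (j : ℕ) (h : j < l.length),
      (cont (l.take (j + 1)) : ℝ) < t → l.get ⟨j, h⟩ ≤ M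

/-- `x` is a denominator of some convergent to `v`. -/
def IsConvDen (v : ℚ) (x : ℕ) : Prop :=
  ∃ (l : List ℕ) (j : ℕ), IsCFOf v l ∧ j ≤ l.length ∧ x = cont (l.take j)

def contD : List ℕ → ℕ
  | [] => 0
  | [_] => 1
  | c :: d :: l => c * contD (d :: l) + contD l

theorem cont_append : ∀ (a b : List ℕ), b ≠ [] →
    cont (a ++ b) = cont a * cont b + contD a * cont b.tail
  | [], b, hb => by simp [cont, contD]
  | [x], b, hb => by
    cases b with
    | nil => exact absurd rfl hb
    | cons c l => simp [cont, contD]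
  | x :: y :: a, b, hb => by
    have h1 := cont_append (y :: a) b hb
    have h2 := cont_append a b hb
    show cont (x :: ((y :: a) ++ b)) = _
    have : (y :: a) ++ b = y :: (a ++ b) := rfl
    rw [show (x :: ((y :: a) ++ b)) = x :: y :: (a ++ b) from rfl]
    show x * cont (y :: (a ++ b)) + cont (a ++ b) = _
    rw [show (y :: (a ++ b)) = (y :: a) ++ b from rfl, h1, h2]
    show _ = cont (x :: y :: a) * cont b + contD (x :: y :: a) * cont b.tail
    show _ = (x * cont (y :: a) + cont a) * cont b + (x * contD (y :: a) + contD a) * cont b.tail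
    ring

theorem cont_pos : ∀ (l : List ℕ), (∀ c ∈ l, 1 ≤ c) → 1 ≤ cont l
  | [], _ => le_refl _
  | [c], h => h c (by simp)
  | c :: d :: l, h => by
    have h1 := cont_pos (d :: l) (fun x hx => h x (by simp [hx] <;> tauto))
    have hc := h c (by simp)
    show 1 ≤ c * cont (d :: l) + cont l
    nlinarith

theorem contD_le_cont : ∀ (l : List ℕ), (∀ c ∈ l, 1 ≤ c) → contD l ≤ cont l
  | [], _ => by simp [cont, contD]
  | [c], h => by simpa [cont, contD] using h c (by simp)
  | c :: d :: l, h => by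
    have h1 := contD_le_cont (d :: l) (fun x hx => h x (by simp [hx] <;> tauto))
    have h2 := contD_le_cont l (fun x hx => h x (by simp [hx] <;> tauto))
    show c * contD (d :: l) + contD l ≤ c * cont (d :: l) + cont l
    have := Nat.mul_le_mul_left c h1
    omega

theorem contD_eq_dropLast : ∀ (l : List ℕ), l ≠ [] → contD l = cont l.dropLast
  | [c], _ => rfl
  | [c, d], _ => by simp [cont, contD]
  | c :: d :: e :: l, _ => by
    have h1 := contD_eq_dropLast (d :: e :: l) (by simp)
    have h2 := contD_eq_dropLast (e :: l) (by simp)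
    show c * contD (d :: e :: l) + contD (e :: l) = cont (c :: d :: (e :: l).dropLast)
    rw [h1, h2]
    show _ = c * cont (d :: (e :: l).dropLast) + cont ((e :: l).dropLast)
    rfl

theorem cont_reverse : ∀ (l : List ℕ), cont l.reverse = cont l
  | [] => rfl
  | [c] => rfl
  | c :: d :: l => by
    have h1 := cont_reverse (d :: l)
    have h2 := cont_reverse l
    rw [show (c :: d :: l).reverse = (d :: l).reverse ++ [c] by simp]
    rw [cont_append _ [c] (by simp)]
    have hd : contD ((d :: l).reverse) = cont l.reverse := by
      rw [contD_eq_dropLast _ (by simp), List.dropLast_reverse]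
      rfl
    rw [hd, h1, h2]
    show cont (d :: l) * c + cont l * 1 = c * cont (d :: l) + cont l
    ring

theorem cont_coprime_tail : ∀ (l : List ℕ), Nat.Coprime (cont l) (cont l.tail)
  | [] => Nat.coprime_one_left _
  | [c] => Nat.coprime_one_right _
  | c :: d :: l => by
    have h1 := cont_coprime_tail (d :: l)
    show Nat.Coprime (c * cont (d :: l) + cont l) (cont (d :: l))
    have : cont l = cont (d :: l).tail := rfl
    rw [this, mul_comm]
    exact (Nat.coprime_mul_left_add_left (cont (d :: l).tail) (cont (d :: l)) c).mpr h1.symm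

theorem cont_coprime_contD (l : List ℕ) : Nat.Coprime (cont l) (contD l) := by
  cases l with
  | nil => exact Nat.coprime_one_left _
  | cons c l' =>
    rw [contD_eq_dropLast _ (by simp)]
    have h1 : (c :: l').dropLast = ((c :: l').reverse.tail).reverse := by
      rw [← List.dropLast_reverse, List.reverse_reverse]
    rw [h1, cont_reverse, ← cont_reverse (c :: l')]
    exact cont_coprime_tail _

theorem cont_tail_le : ∀ (l : List ℕ), (∀ c ∈ l, 1 ≤ c) → cont l.tail ≤ cont l
  | [], _ => le_refl _
  | [c], h => by simpa [cont] using h c (by simp)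
  | c :: d :: l, h => by
    show cont (d :: l) ≤ c * cont (d :: l) + cont l
    have hc := h c (by simp)
    nlinarith

theorem cont_prefix_le (a b : List ℕ) (hb : ∀ c ∈ b, 1 ≤ c) : cont a ≤ cont (a ++ b) := by
  cases b with
  | nil => simp
  | cons c l =>
    rw [cont_append _ _ (by simp)]
    have := cont_pos (c :: l) hb
    nlinarith

theorem cfVal_nil : cfVal [] = 0 := rfl

theorem cfVal_cons (c : ℕ) (l : List ℕ) : cfVal (c :: l) = 1 / ((c : ℚ) + cfVal l) := rfl

theorem cfVal_mem : ∀ (l : List ℕ) (h : l ≠ []), (∀ c ∈ l, 1 ≤ c) → 2 ≤ l.getLast h →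
    0 < cfVal l ∧ cfVal l < 1
  | [c], _, hpos, hlast => by
    rw [cfVal_cons, cfVal_nil]
    have : (2 : ℚ) ≤ c := by exact_mod_cast hlast
    constructor
    · positivity
    · rw [div_lt_one (by linarith)]; linarith
  | c :: d :: l, _, hpos, hlast => by
    have ih := cfVal_mem (d :: l) (by simp) (fun x hx => hpos x (by simp at hx ⊢; tauto))
      (by rw [← List.getLast_cons (l := d :: l) (by simp)]; exact hlast)
    rw [cfVal_cons]
    have hc : (1 : ℚ) ≤ c := by exact_mod_cast hpos c (by simp)
    constructor
    · exact div_pos one_pos (by linarith [ih.1])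
    · rw [div_lt_one (by linarith [ih.1])]; linarith [ih.1]

theorem inv_mem_uIcc (a b u : ℚ) (ha : 0 < a) (hb : 0 < b) (hu : 0 < u)
    (h : 1/u ∈ Set.uIcc (1/a) (1/b)) : u ∈ Set.uIcc a b := by
  rcases Set.mem_uIcc.1 h with ⟨h1, h2⟩ | ⟨h1, h2⟩
  · exact Set.mem_uIcc.2 (Or.inr ⟨le_of_one_div_le_one_div hu h2,
      le_of_one_div_le_one_div ha h1⟩)
  · exact Set.mem_uIcc.2 (Or.inl ⟨le_of_one_div_le_one_div hu h2,
      le_of_one_div_le_one_div hb h1⟩)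

theorem cf_cylinder (s₁ s₂ : List ℕ) (hs₁ : s₁ ≠ []) (hs₂ : s₂ ≠ [])
    (hs₁p : ∀ c ∈ s₁, 1 ≤ c) (hs₂p : ∀ c ∈ s₂, 1 ≤ c)
    (hs₁l : 2 ≤ s₁.getLast hs₁) (hs₂l : 2 ≤ s₂.getLast hs₂) :
    ∀ (p : List ℕ), (∀ c ∈ p, 1 ≤ c) → ∀ (x : ℚ) (l : List ℕ), IsCFOf x l →
      x ∈ Set.uIcc (cfVal (p ++ s₁)) (cfVal (p ++ s₂)) → p <+: l := by
  intro p
  induction p with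
  | nil => intro _ x l _ _; exact List.nil_prefix
  | cons c p ih =>
    intro hp x l hl hx
    have hp' : ∀ c ∈ p, 1 ≤ c := fun x hx => hp x (by simp [hx])
    have hval : ∀ s (hs : s ≠ []), (∀ c ∈ s, 1 ≤ c) → 2 ≤ s.getLast hs →
        0 < cfVal (p ++ s) ∧ cfVal (p ++ s) < 1 := by
      intro s hs hsp hsl
      refine cfVal_mem (p ++ s) (by simp [hs]) ?_ ?_
      · intro y hy; rcases List.mem_append.1 hy with h | h
        · exact hp' y h
        · exact hsp y h
      · rw [List.getLast_append]
        simp only [List.isEmpty_iff, hs, dite_false]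
        exact hsl
    have hy₁ := hval s₁ hs₁ hs₁p hs₁l
    have hy₂ := hval s₂ hs₂ hs₂p hs₂l
    set y₁ := cfVal (p ++ s₁) with hy₁def
    set y₂ := cfVal (p ++ s₂) with hy₂def
    have hc1 : (1 : ℚ) ≤ c := by exact_mod_cast hp c (by simp)
    have hx' : x ∈ Set.uIcc (1/((c:ℚ) + y₁)) (1/((c:ℚ) + y₂)) := by
      simpa [List.cons_append, cfVal_cons] using hx
    have hxpos : 0 < x := by
      rcases Set.mem_uIcc.1 hx' with ⟨h1, _⟩ | ⟨h1, _⟩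
      · exact lt_of_lt_of_le (div_pos one_pos (by linarith [hy₁.1])) h1
      · exact lt_of_lt_of_le (div_pos one_pos (by linarith [hy₂.1])) h1
    obtain ⟨hlp, hll, hlv⟩ := hl
    cases l with
    | nil => rw [← hlv] at hxpos; exact absurd hxpos (by norm_num [cfVal_nil])
    | cons c' l' =>
      have hc'1 : (1 : ℚ) ≤ c' := by exact_mod_cast hlp c' (by simp)
      set z := cfVal l' with hzdef
      have hz : (l' = [] ∧ z = 0) ∨ (l' ≠ [] ∧ 0 < z ∧ z < 1) := by
        cases l' with
        | nil => exact Or.inl ⟨rfl, rfl⟩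
        | cons d l'' =>
          refine Or.inr ⟨by simp, cfVal_mem _ (by simp)
            (fun y hy => hlp y (by simp at hy ⊢; tauto)) ?_⟩
          rw [← List.getLast_cons (l := d :: l'') (by simp)]
          exact hll (by simp)
      have hz0 : 0 ≤ z := by
        rcases hz with ⟨_, h⟩ | ⟨_, h, _⟩
        · rw [h]
        · linarith
      have hz1 : z < 1 := by
        rcases hz with ⟨_, h⟩ | ⟨_, _, h⟩
        · rw [h]; norm_num
        · exact h
      have hxz : x = 1/((c':ℚ) + z) := by rw [← hlv, cfVal_cons]
      have hu : (c':ℚ) + z ∈ Set.uIcc ((c:ℚ) + y₁) ((c:ℚ) + y₂) := by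
        apply inv_mem_uIcc _ _ _ (by linarith [hy₁.1]) (by linarith [hy₂.1]) (by linarith)
        rw [← hxz]; exact hx'
      have hub : (c:ℚ) < (c':ℚ) + z ∧ (c':ℚ) + z < (c:ℚ) + 1 := by
        rcases Set.mem_uIcc.1 hu with ⟨h1, h2⟩ | ⟨h1, h2⟩
        · exact ⟨by linarith [hy₁.1], by linarith [hy₂.2]⟩
        · exact ⟨by linarith [hy₂.1], by linarith [hy₁.2]⟩
      have hcc : c' = c := by
        have h1 : (c':ℚ) < c + 1 := by linarith
        have h2 : (c:ℚ) < c' + 1 := by linarith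
        have h1' : c' < c + 1 := by exact_mod_cast h1
        have h2' : c < c' + 1 := by exact_mod_cast h2
        omega
      subst hcc
      have hzu : z ∈ Set.uIcc y₁ y₂ := by
        rcases Set.mem_uIcc.1 hu with ⟨h1, h2⟩ | ⟨h1, h2⟩
        · exact Set.mem_uIcc.2 (Or.inl ⟨by linarith, by linarith⟩)
        · exact Set.mem_uIcc.2 (Or.inr ⟨by linarith, by linarith⟩)
      have hl'ne : l' ≠ [] := by
        rcases hz with ⟨he, h0⟩ | ⟨hne, _⟩
        · exfalso
          rcases Set.mem_uIcc.1 hzu with ⟨h1, _⟩ | ⟨h1, _⟩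
          · rw [h0] at h1; linarith [hy₁.1]
          · rw [h0] at h1; linarith [hy₂.1]
        · exact hne
      have : p <+: l' := by
        apply ih hp' z l' ⟨fun y hy => hlp y (by simp [hy]), ?_, rfl⟩ hzu
        intro h
        rw [← List.getLast_cons (l := l') hl'ne]
        exact hll (by simp)
      obtain ⟨tl, htl⟩ := this
      exact ⟨tl, by simp [htl]⟩

theorem take_decompose (p l : List ℕ) (j : ℕ) (hpre : p <+: l) (hj : j ≤ l.length)
    (hplen : p.length < j) :
    ∃ B : List ℕ, B ≠ [] ∧ l.take j = p ++ B := by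
  have hp : p = l.take p.length := List.prefix_iff_eq_take.1 hpre
  refine ⟨(l.take j).drop p.length, ?_, ?_⟩
  · have hlen : ((l.take j).drop p.length).length = j - p.length := by
      simp [List.length_take, min_eq_left hj]
    intro h
    rw [h] at hlen
    simp at hlen
    omega
  · conv_lhs => rw [← List.take_append_drop p.length (l.take j)]
    congr 1
    rw [List.take_take, min_eq_left (le_of_lt hplen), ← hp]


set_option maxHeartbeats 4000000 in
/-- Independence of two critical denominators: if `a₁, a₂ ∈ Z_M(t)` lie in the
same interval `J_{u/v}`, `u/v = [0;r₁,…,r_l] ∈ Q̄_M(t)`, and `x₁ ≠ x₂` are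
denominators of convergents to `a₁/q`, `a₂/q` lying in `(t, q/t)`, then
`αx₁ ≡ βx₂ (mod q)` has no solution with `0 < |α|, |β| ≤ C`, provided
`N^{3/2} ≤ √q/(2(M+2)²C)` where `t = √(q/N)`. -/
theorem critical_denominators_pair_independent
    (q M : ℕ) (hq : 0 < q) (hM : 2 ≤ M) (N t : ℝ) (hN : 1 ≤ N)
    (ht : t = Real.sqrt ((q : ℝ) / N))
    (C : ℝ) (hC1 : 1 ≤ C) (hC2 : C < t / 4)
    (r : List ℕ) (hr : r ≠ [])
    (hrpos : ∀ i ∈ r, 1 ≤ i) (hrlast : 2 ≤ r.getLast hr) (hrM : ∀ i ∈ r, i ≤ M)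
    (hrden : (cont r : ℝ) < t) (hrden' : t ≤ (cont (r ++ [1]) : ℝ))
    (a₁ a₂ : ℕ) (ha₁ : 0 < a₁) (ha₁q : a₁ < q) (ha₂ : 0 < a₂) (ha₂q : a₂ < q)
    (hZ₁ : ZPred q M t a₁) (hZ₂ : ZPred q M t a₂)
    (hJ₁ : (a₁ : ℚ) / q ∈ Set.uIcc (cfVal (r.dropLast ++ [M + 1]))
        (cfVal (r.dropLast ++ [r.getLast hr - 1, M + 1])))
    (hJ₂ : (a₂ : ℚ) / q ∈ Set.uIcc (cfVal (r.dropLast ++ [M + 1]))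
        (cfVal (r.dropLast ++ [r.getLast hr - 1, M + 1])))
    (x₁ x₂ : ℕ) (hne : x₁ ≠ x₂)
    (hx₁ : IsConvDen ((a₁ : ℚ) / q) x₁) (hx₂ : IsConvDen ((a₂ : ℚ) / q) x₂)
    (hx₁t : t < x₁) (hx₁q : (x₁ : ℝ) < q / t)
    (hx₂t : t < x₂) (hx₂q : (x₂ : ℝ) < q / t)
    (hmain : N ^ ((3 : ℝ) / 2) ≤ Real.sqrt q / (2 * ((M : ℝ) + 2) ^ 2 * C)) :
    ¬ ∃ α β : ℤ, α * β ≠ 0 ∧ (|α| : ℝ) ≤ C ∧ (|β| : ℝ) ≤ C ∧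
        α * (x₁ : ℤ) ≡ β * (x₂ : ℤ) [ZMOD (q : ℤ)] := by
  rintro ⟨α, β, hαβ, hα, hβ, hmod⟩
  have hq0 : (0:ℝ) < q := by exact_mod_cast hq
  have hN0 : (0:ℝ) < N := lt_of_lt_of_le one_pos hN
  have ht0 : 0 < t := by rw [ht]; exact Real.sqrt_pos.2 (div_pos hq0 hN0)
  have ht4 : 4 < t := by linarith only [hC1, hC2]
  have hC0 : 0 < C := lt_of_lt_of_le one_pos hC1
  set p := r.dropLast with hpdef
  have hppos : ∀ c ∈ p, 1 ≤ c := fun c hc => hrpos c ((List.dropLast_sublist r).subset hc)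
  have hcyl := cf_cylinder [M+1] [r.getLast hr - 1, M+1] (by simp) (by simp)
    (by intro c hc; simp at hc; omega)
    (by intro c hc; simp at hc; rcases hc with h | h <;> omega)
    (by simp; omega) (by simp; omega) p hppos
  obtain ⟨l₁, j₁, hcf₁, hj₁, hx₁e⟩ := hx₁
  obtain ⟨l₂, j₂, hcf₂, hj₂, hx₂e⟩ := hx₂
  have hpre₁ : p <+: l₁ := hcyl _ _ hcf₁ hJ₁
  have hpre₂ : p <+: l₂ := hcyl _ _ hcf₂ hJ₂
  have hcp_le_r : cont p ≤ cont r := by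
    conv_rhs => rw [← List.dropLast_append_getLast hr]
    exact cont_prefix_le p [r.getLast hr]
      (by intro c hc; simp at hc; subst hc; exact hrpos _ (List.getLast_mem hr))
  have hcpt : (cont p : ℝ) < t := lt_of_le_of_lt (by exact_mod_cast hcp_le_r) hrden
  have hlen : ∀ (l : List ℕ) (j : ℕ) (x : ℕ), p <+: l → j ≤ l.length →
      x = cont (l.take j) → t < (x : ℝ) → p.length < j := by
    intro l j x hpre hj hxe hxt
    by_contra h
    push_neg at h
    have h1 : l.take j = p.take j := by
      rw [List.prefix_iff_eq_take.1 hpre, List.take_take, min_eq_left h]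
    have h2 : cont (p.take j) ≤ cont p := by
      calc cont (p.take j) ≤ cont (p.take j ++ p.drop j) :=
            cont_prefix_le _ _ (fun c hc => hppos c (List.drop_subset _ _ hc))
      _ = cont p := by rw [List.take_append_drop]
    rw [hxe, h1] at hxt
    have h3 : (cont (p.take j) : ℝ) ≤ (cont p : ℝ) := by exact_mod_cast h2
    linarith only [hxt, h3, hcpt]
  have hlen₁ : p.length < j₁ := hlen l₁ j₁ x₁ hpre₁ hj₁ hx₁e hx₁t
  have hlen₂ : p.length < j₂ := hlen l₂ j₂ x₂ hpre₂ hj₂ hx₂e hx₂t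
  obtain ⟨B₁, hB₁ne, hB₁eq⟩ := take_decompose p l₁ j₁ hpre₁ hj₁ hlen₁
  obtain ⟨B₂, hB₂ne, hB₂eq⟩ := take_decompose p l₂ j₂ hpre₂ hj₂ hlen₂
  have hB₁pos : ∀ c ∈ B₁, 1 ≤ c := fun c hc =>
    hcf₁.1 c (List.take_subset j₁ l₁ (hB₁eq ▸ List.mem_append_right p hc))
  have hB₂pos : ∀ c ∈ B₂, 1 ≤ c := fun c hc =>
    hcf₂.1 c (List.take_subset j₂ l₂ (hB₂eq ▸ List.mem_append_right p hc))
  set w := cont p with hwdef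
  set w' := contD p with hw'def
  set A₁ := cont B₁ with hA₁def
  set A₁' := cont B₁.tail with hA₁'def
  set A₂ := cont B₂ with hA₂def
  set A₂' := cont B₂.tail with hA₂'def
  have hx₁d : x₁ = w * A₁ + w' * A₁' := by rw [hx₁e, hB₁eq, cont_append _ _ hB₁ne]
  have hx₂d : x₂ = w * A₂ + w' * A₂' := by rw [hx₂e, hB₂eq, cont_append _ _ hB₂ne]
  have hw1 : 1 ≤ w := cont_pos p hppos
  have hw'w : w' ≤ w := contD_le_cont p hppos
  have hcop : Nat.Coprime w w' := cont_coprime_contD p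
  have hA₁pos : 1 ≤ A₁ := cont_pos _ hB₁pos
  have hA₁'le : A₁' ≤ A₁ := cont_tail_le _ hB₁pos
  have hA₂'le : A₂' ≤ A₂ := cont_tail_le _ hB₂pos
  have hg : r.getLast hr ≤ M := hrM _ (List.getLast_mem hr)
  have hcontr1 : cont (r ++ [1]) = cont r + contD r := by
    rw [cont_append r [1] (by simp)]; simp [cont]
  have hcontr2 : cont r = w * r.getLast hr + w' := by
    conv_lhs => rw [← List.dropLast_append_getLast hr]
    rw [cont_append _ _ (by simp)]; simp [cont, mul_comm]
    simp only [hwdef, hw'def, hpdef, mul_comm]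
  have hcontrD : contD r = w := by rw [contD_eq_dropLast r hr]
  have hr1le : cont (r ++ [1]) ≤ (M + 2) * w := by
    rw [hcontr1, hcontr2, hcontrD]
    have h := Nat.mul_le_mul_left w hg
    calc w * r.getLast hr + w' + w ≤ w * M + w + w := by
          exact add_le_add (add_le_add h hw'w) le_rfl
    _ = (M + 2) * w := by ring
  have htMw : t ≤ ((M:ℝ) + 2) * w := by
    refine hrden'.trans ?_
    have h : (cont (r ++ [1]) : ℝ) ≤ (((M + 2) * w : ℕ) : ℝ) := by exact_mod_cast hr1le
    push_cast at h
    linarith only [h]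
  have hw0 : (0:ℝ) < (w:ℝ) := by exact_mod_cast hw1
  have hCpos : (0:ℝ) < 2 * ((M:ℝ) + 2) ^ 2 * C := by positivity
  have hsN : (0:ℝ) < Real.sqrt N := Real.sqrt_pos.2 hN0
  have h32 : N ^ ((3:ℝ)/2) = N * Real.sqrt N := by
    have h : (3:ℝ)/2 = 1 + 1/2 := by norm_num
    rw [h, Real.rpow_add hN0, Real.rpow_one, Real.sqrt_eq_rpow]
  have hts : t = Real.sqrt q / Real.sqrt N := by rw [ht, Real.sqrt_div hq0.le]
  have hmain' : N * Real.sqrt N * (2 * ((M:ℝ)+2)^2 * C) ≤ Real.sqrt q := by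
    rw [← h32]; exact (le_div_iff₀ hCpos).1 hmain
  have hkey : 2 * ((M:ℝ)+2)^2 * C * N ≤ t := by
    rw [hts, le_div_iff₀ hsN]
    linarith only [hmain']
  have ht2 : t^2 * N = q := by
    rw [ht, Real.sq_sqrt (div_nonneg hq0.le hN0.le)]
    field_simp
  have hstep : 2 * C * (q:ℝ) ≤ t * (w:ℝ)^2 := by
    have hM2 : (0:ℝ) < ((M:ℝ)+2)^2 := by positivity
    have h1 : t^2 ≤ ((M:ℝ)+2)^2 * (w:ℝ)^2 := by
      have g := mul_le_mul htMw htMw ht0.le (le_trans ht0.le htMw)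
      calc t^2 = t*t := by ring
      _ ≤ (((M:ℝ)+2)*w)*(((M:ℝ)+2)*w) := g
      _ = ((M:ℝ)+2)^2*(w:ℝ)^2 := by ring
    have F0 : 2*C*((M:ℝ)+2)^2*(t^2*N) = 2*C*((M:ℝ)+2)^2*q := by rw [ht2]
    have F1 := mul_le_mul_of_nonneg_left h1 ht0.le
    have F2 := mul_le_mul_of_nonneg_left hkey (sq_nonneg t)
    have F4 : ((M:ℝ)+2)^2*(2*C*q) ≤ ((M:ℝ)+2)^2*(t*(w:ℝ)^2) := by
      linarith only [F0, F1, F2]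
    exact le_of_mul_le_mul_left F4 hM2
  have hαR : |(α:ℝ)| ≤ C := by push_cast at hα; exact hα
  have hβR : |(β:ℝ)| ≤ C := by push_cast at hβ; exact hβ
  have hx₁0 : (0:ℝ) ≤ (x₁:ℝ) := Nat.cast_nonneg x₁
  have hx₂0 : (0:ℝ) ≤ (x₂:ℝ) := Nat.cast_nonneg x₂
  have hdvdq : (q:ℤ) ∣ (β * x₂ - α * x₁) := hmod.dvd
  have heq0 : (α : ℤ) * x₁ = β * x₂ := by
    have habs : |((β * x₂ - α * x₁ : ℤ) : ℝ)| < (q:ℝ) := by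
      push_cast
      have h1 : |(β:ℝ) * x₂ - (α:ℝ) * x₁| ≤ |(β:ℝ)| * x₂ + |(α:ℝ)| * x₁ := by
        calc |(β:ℝ) * x₂ - (α:ℝ) * x₁| ≤ |(β:ℝ) * x₂| + |(α:ℝ) * x₁| := abs_sub _ _
        _ = |(β:ℝ)| * x₂ + |(α:ℝ)| * x₁ := by
            rw [abs_mul, abs_mul, abs_of_nonneg hx₁0, abs_of_nonneg hx₂0]
      have h2 : |(β:ℝ)| * x₂ + |(α:ℝ)| * x₁ ≤ C * x₂ + C * x₁ := by gcongr
      have h3 : C * (x₂:ℝ) + C * x₁ < C * (2 * ((q:ℝ)/t)) := by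
        have g1 := mul_lt_mul_of_pos_left hx₂q hC0
        have g2 := mul_lt_mul_of_pos_left hx₁q hC0
        linarith only [g1, g2]
      have h4 : C * (2 * ((q:ℝ)/t)) < q := by
        have he : C * (2 * ((q:ℝ)/t)) = (2*C*q)/t := by ring
        rw [he, div_lt_iff₀ ht0]
        have g1 : 2*C < t := by linarith only [hC1, hC2, ht4]
        have g2 := mul_lt_mul_of_pos_right g1 hq0
        linarith only [g2]
      linarith only [h1, h2, h3, h4]
    have h5 : |(β * x₂ - α * x₁ : ℤ)| < (q:ℤ) := by exact_mod_cast habs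
    rcases eq_or_ne (β * (x₂:ℤ) - α * x₁) 0 with h | h
    · exact (sub_eq_zero.1 h).symm
    · exfalso
      have h6 := Int.le_of_dvd (abs_pos.2 h) ((dvd_abs _ _).2 hdvdq)
      linarith only [h5, h6]
  have e₁ : (x₁:ℤ) = (w:ℤ) * A₁ + (w':ℤ) * A₁' := by exact_mod_cast hx₁d
  have e₂ : (x₂:ℤ) = (w:ℤ) * A₂ + (w':ℤ) * A₂' := by exact_mod_cast hx₂d
  have hkeyeq : (w:ℤ) * (α * A₁ - β * A₂) = (w':ℤ) * (β * A₂' - α * A₁') := by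
    have h := heq0
    rw [e₁, e₂] at h
    linear_combination h
  have hcopZ : IsCoprime (w:ℤ) (w':ℤ) := by
    rw [Int.isCoprime_iff_gcd_eq_one, Int.gcd_natCast_natCast]
    exact hcop
  have hdvdX : (w:ℤ) ∣ (β * A₂' - α * A₁') :=
    hcopZ.dvd_of_dvd_mul_left ⟨α * A₁ - β * A₂, hkeyeq.symm⟩
  have ex₁R : (x₁:ℝ) = (w:ℝ) * A₁ + (w':ℝ) * A₁' := by exact_mod_cast hx₁d
  have ex₂R : (x₂:ℝ) = (w:ℝ) * A₂ + (w':ℝ) * A₂' := by exact_mod_cast hx₂d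
  have hCA : C * ((A₁:ℝ) + A₂) < w := by
    have hn1 : (0:ℝ) ≤ (w':ℝ) * A₁' := by positivity
    have hn2 : (0:ℝ) ≤ (w':ℝ) * A₂' := by positivity
    have h1 : (w:ℝ) * (C * ((A₁:ℝ) + A₂)) ≤ C * ((x₁:ℝ) + x₂) := by
      rw [ex₁R, ex₂R]
      linarith only [mul_nonneg hC0.le hn1, mul_nonneg hC0.le hn2]
    have h2 : C * ((x₁:ℝ) + x₂) < C * (2 * ((q:ℝ)/t)) := by
      have g1 := mul_lt_mul_of_pos_left hx₂q hC0
      have g2 := mul_lt_mul_of_pos_left hx₁q hC0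
      linarith only [g1, g2]
    have h3 : C * (2 * ((q:ℝ)/t)) ≤ (w:ℝ) * w := by
      have he : C * (2*((q:ℝ)/t)) = (2*C*q)/t := by ring
      rw [he, div_le_iff₀ ht0]
      have he2 : (w:ℝ) * w * t = t * (w:ℝ)^2 := by ring
      linarith only [hstep, he2]
    have h4 : (w:ℝ) * (C * ((A₁:ℝ) + A₂)) < (w:ℝ) * w := by
      linarith only [h1, h2, h3]
    exact lt_of_mul_lt_mul_left h4 hw0.le
  have hXabs : |((β * A₂' - α * A₁' : ℤ) : ℝ)| < (w:ℝ) := by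
    push_cast
    have h1 : |(β:ℝ) * A₂' - (α:ℝ) * A₁'| ≤ |(β:ℝ)| * A₂' + |(α:ℝ)| * A₁' := by
      calc |(β:ℝ) * A₂' - (α:ℝ) * A₁'| ≤ |(β:ℝ) * A₂'| + |(α:ℝ) * A₁'| := abs_sub _ _
      _ = |(β:ℝ)| * A₂' + |(α:ℝ)| * A₁' := by
          rw [abs_mul, abs_mul,
            abs_of_nonneg (show (0:ℝ) ≤ (A₂':ℝ) from Nat.cast_nonneg _),
            abs_of_nonneg (show (0:ℝ) ≤ (A₁':ℝ) from Nat.cast_nonneg _)]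
    have hA1'R : (A₁':ℝ) ≤ A₁ := by exact_mod_cast hA₁'le
    have hA2'R : (A₂':ℝ) ≤ A₂ := by exact_mod_cast hA₂'le
    have h2 : |(β:ℝ)| * A₂' + |(α:ℝ)| * A₁' ≤ C * ((A₁:ℝ) + A₂) := by
      have g1 := mul_le_mul_of_nonneg_right hβR (Nat.cast_nonneg (α := ℝ) A₂')
      have g2 := mul_le_mul_of_nonneg_right hαR (Nat.cast_nonneg (α := ℝ) A₁')
      have g3 := mul_le_mul_of_nonneg_left hA2'R hC0.le
      have g4 := mul_le_mul_of_nonneg_left hA1'R hC0.le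
      linarith only [g1, g2, g3, g4]
    linarith only [h1, h2, hCA]
  have hX0 : (β * A₂' - α * A₁' : ℤ) = 0 := by
    by_contra h
    have h1 := Int.le_of_dvd (abs_pos.2 h) ((dvd_abs _ _).2 hdvdX)
    have h2 : |(β * A₂' - α * A₁' : ℤ)| < (w:ℤ) := by exact_mod_cast hXabs
    linarith only [h1, h2]
  have hE2 : (α:ℤ) * A₁' = β * A₂' := (sub_eq_zero.1 hX0).symm
  have hE1 : (α:ℤ) * A₁ = β * A₂ := by
    rw [hX0, mul_zero] at hkeyeq
    rcases mul_eq_zero.1 hkeyeq with h | h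
    · exact absurd (by exact_mod_cast h : w = 0) (by omega)
    · exact sub_eq_zero.1 h
  have hα0 : α ≠ 0 := fun h => hαβ (by simp [h])
  have hcross : (A₁:ℤ) * A₂' = A₂ * A₁' :=
    mul_left_cancel₀ hα0 (by linear_combination (A₂':ℤ) * hE1 - (A₂:ℤ) * hE2)
  have hcrossN : A₁ * A₂' = A₂ * A₁' := by exact_mod_cast hcross
  have hcop₁ : Nat.Coprime A₁ A₁' := cont_coprime_tail B₁
  have hcop₂ : Nat.Coprime A₂ A₂' := cont_coprime_tail B₂
  have hd1 : A₁ ∣ A₂ := hcop₁.dvd_of_dvd_mul_right ⟨A₂', hcrossN.symm⟩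
  have hd2 : A₂ ∣ A₁ := hcop₂.dvd_of_dvd_mul_right ⟨A₁', hcrossN⟩
  have hA12 : A₁ = A₂ := Nat.dvd_antisymm hd1 hd2
  have hA12' : A₁' = A₂' := by
    rw [← hA12] at hcrossN
    exact (Nat.eq_of_mul_eq_mul_left (by omega) hcrossN).symm
  exact hne (by rw [hx₁d, hx₂d, hA12, hA12'])
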